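/- Let M = (M₁,…,M_d) be a d-tuple of m×m complex matrices with ‖Σ_{j=1}^d M_j*M_j‖ ≤ 1 (a column contraction), let Mx denote the linear pencil M₁x₁ + ⋯ + M_dx_d, and let π_n(z) = Σ_{k=0}^n (1 − (k+1)/(n+2)) z^k. Then the multiplier norm of the matrix free polynomial π_n(Mx) (as a left multiplication operator on m×m-matrix-valued free polynomials with the ℓ² coefficient norm) is at most (n+1)/2. -/

import Mathlib

open scoped BigOperators Kronecker
open Matrix

noncomputable section

/-- Words in the letters `1,…,d`. -/
abbrev Word (d : ℕ) := FreeMonoid (Fin d)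

/-- The free algebra `ℂ⟨x₁,…,x_d⟩`, realized as the monoid algebra of the free monoid. -/
abbrev FreePoly (d : ℕ) := MonoidAlgebra ℂ (Word d)

/-- Squared ℓ² norm of the coefficients of a free polynomial. -/
def FreePoly.normSq {d : ℕ} (p : FreePoly d) : ℝ := p.coeff.sum fun _ c => ‖c‖ ^ 2

/-- ℓ² norm of the coefficients of a free polynomial. -/
def FreePoly.norm2 {d : ℕ} (p : FreePoly d) : ℝ := Real.sqrt p.normSq

/-- `p` has degree at most `n`. -/
def FreePoly.degLE {d : ℕ} (p : FreePoly d) (n : ℕ) : Prop :=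
  ∀ w ∈ p.coeff.support, w.toList.length ≤ n

/-- Evaluation of a word at a `d`-tuple of `k × k` matrices: `X^w`. -/
def wordEval {d k : ℕ} (X : Fin d → Matrix (Fin k) (Fin k) ℂ) (w : Word d) :
    Matrix (Fin k) (Fin k) ℂ :=
  (w.toList.map X).prod

/-- Evaluation of a free polynomial at a matrix tuple. -/
def FreePoly.eval {d k : ℕ} (p : FreePoly d) (X : Fin d → Matrix (Fin k) (Fin k) ℂ) :
    Matrix (Fin k) (Fin k) ℂ :=
  p.coeff.sum fun w c => c • wordEval X w

/-- `k×k`-matrix-valued free polynomials `M_k(ℂ⟨x⟩)`. -/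
abbrev MatPoly (d k : ℕ) := Matrix (Fin k) (Fin k) (FreePoly d)

/-- Squared ℓ² (Frobenius) norm of the coefficients of a matrix free polynomial. -/
def MatPoly.normSq {d k : ℕ} (F : MatPoly d k) : ℝ := ∑ i, ∑ j, (F i j).normSq

def MatPoly.norm2 {d k : ℕ} (F : MatPoly d k) : ℝ := Real.sqrt F.normSq

def MatPoly.degLE {d k : ℕ} (F : MatPoly d k) (n : ℕ) : Prop := ∀ i j, (F i j).degLE n

/-- Evaluation of a matrix free polynomial at an `m×m` matrix tuple,
`F(X) = Σ_w A_w ⊗ X^w ∈ M_k(ℂ) ⊗ M_m(ℂ)`. -/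
def MatPoly.eval {d k m : ℕ} (F : MatPoly d k) (X : Fin d → Matrix (Fin m) (Fin m) ℂ) :
    Matrix (Fin k × Fin m) (Fin k × Fin m) ℂ :=
  Matrix.of fun p q => ((F p.1 q.1).eval X) p.2 q.2

/-- The homogeneous linear pencil `Ax = A₁x₁ + ⋯ + A_d x_d` as a matrix free polynomial. -/
def pencil {d m : ℕ} (A : Fin d → Matrix (Fin m) (Fin m) ℂ) : MatPoly d m :=
  Matrix.of fun i j => ∑ l, MonoidAlgebra.single (FreeMonoid.of l) (A l i j)

/-- Operator norm of a matrix, acting on Euclidean space. -/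
def opNorm {ι : Type} [Fintype ι] [DecidableEq ι] (M : Matrix ι ι ℂ) : ℝ :=
  ‖Matrix.toEuclideanCLM (𝕜 := ℂ) M‖

/-- `X` is a strict row contraction: `‖X₁X₁* + ⋯ + X_dX_d*‖ < 1`. -/
def IsStrictRowContraction {d k : ℕ} (X : Fin d → Matrix (Fin k) (Fin k) ℂ) : Prop :=
  opNorm (∑ j, X j * (X j)ᴴ) < 1

/-- The column norm `‖A‖_col = ‖Σ Aⱼ*Aⱼ‖^{1/2}`. -/
def colNorm {d m : ℕ} (A : Fin d → Matrix (Fin m) (Fin m) ℂ) : ℝ :=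
  Real.sqrt (opNorm (∑ j, (A j)ᴴ * A j))

/-- The completely positive map `Ψ_X : T ↦ Σ Xⱼ T Xⱼ*`. -/
def Psi {d n : ℕ} (X : Fin d → Matrix (Fin n) (Fin n) ℂ) :
    Module.End ℂ (Matrix (Fin n) (Fin n) ℂ) where
  toFun T := ∑ j, X j * T * (X j)ᴴ
  map_add' T S := by
    simp [Matrix.mul_add, Matrix.add_mul, Finset.sum_add_distrib]
  map_smul' c T := by
    simp [Matrix.mul_smul, Matrix.smul_mul, Finset.smul_sum]

/-- The outer spectral radius `ρ(X)`: the square root of the spectral radius of `Ψ_X`. -/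
def outerRadius {d n : ℕ} (X : Fin d → Matrix (Fin n) (Fin n) ℂ) : ℝ :=
  Real.sqrt (sSup ((fun μ : ℂ => ‖μ‖) '' spectrum ℂ (Psi X)))

/-- The `N × N` dilation `diag(A, I)` of a `k × k` matrix polynomial. -/
def dilate {d k : ℕ} (A : MatPoly d k) (N : ℕ) : MatPoly d N :=
  Matrix.of fun i j =>
    if hi : (i : ℕ) < k then
      (if hj : (j : ℕ) < k then A ⟨i, hi⟩ ⟨j, hj⟩ else 0)
    else if (i : ℕ) = (j : ℕ) then 1 else 0

/-- `A` and `B` (square matrix polynomials of possibly different sizes) are stably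
associated: `P · diag(A, I) · Q = diag(B, I)` for some invertible `P, Q ∈ GL_N(ℂ⟨x⟩)`. -/
def StablyAssociated {d k l : ℕ} (A : MatPoly d k) (B : MatPoly d l) : Prop :=
  ∃ N : ℕ, k ≤ N ∧ l ≤ N ∧ ∃ P Q : MatPoly d N, IsUnit P ∧ IsUnit Q ∧
    P * dilate A N * Q = dilate B N

/-- A tuple of matrices is irreducible if it generates the full matrix algebra. -/
def IrreducibleTuple {d : ℕ} {ι : Type} [Fintype ι] [DecidableEq ι]
    (A : Fin d → Matrix ι ι ℂ) : Prop :=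
  Algebra.adjoin ℂ (Set.range A) = ⊤

/-- A regular, non-invertible matrix polynomial is an atom if it is not a product of two
non-invertible matrix polynomials. -/
def IsAtomMP {d k : ℕ} (F : MatPoly d k) : Prop :=
  IsRegular F ∧ ¬IsUnit F ∧ ∀ G H : MatPoly d k, F = G * H → IsUnit G ∨ IsUnit H

/-- `π_n(Mx) = Σ_{k=0}^n (1 − (k+1)/(n+2)) (Mx)^k`. -/
def piMx {d m : ℕ} (n : ℕ) (M : Fin d → Matrix (Fin m) (Fin m) ℂ) : MatPoly d m :=
  ∑ k ∈ Finset.range (n + 1), (1 - ((k : ℂ) + 1) / ((n : ℂ) + 2)) • pencil M ^ k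

namespace Aux
variable {d k m : ℕ}

instance : DecidableEq (Word d) := fun a b => decEq (α := List (Fin d)) a b

lemma freePoly_normSq_eq_sum (p : FreePoly d) (S : Finset (Word d)) (h : p.coeff.support ⊆ S) :
    p.normSq = ∑ w ∈ S, ‖p.coeff w‖ ^ 2 := by
  rw [FreePoly.normSq, Finsupp.sum]
  exact Finset.sum_subset h fun w _ hw => by
    simp [Finsupp.notMem_support_iff.mp hw]

def bigSupp (F : MatPoly d k) : Finset (Word d) :=
  Finset.univ.biUnion fun p : Fin k × Fin k => (F p.1 p.2).coeff.support

lemma supp_subset_bigSupp (F : MatPoly d k) (i j : Fin k) : (F i j).coeff.support ⊆ bigSupp F :=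
  fun w hw => Finset.mem_biUnion.mpr ⟨(i, j), Finset.mem_univ _, hw⟩

lemma matPoly_normSq_eq_sum (F : MatPoly d k) (W : Finset (Word d))
    (h : ∀ i j, (F i j).coeff.support ⊆ W) :
    F.normSq = ∑ i, ∑ j, ∑ w ∈ W, ‖(F i j).coeff w‖ ^ 2 :=
  Finset.sum_congr rfl fun i _ => Finset.sum_congr rfl fun j _ =>
    freePoly_normSq_eq_sum _ _ (h i j)

def vec (F : MatPoly d k) (W : Finset (Word d)) :
    EuclideanSpace ℂ ((Fin k × Fin k) × ↥W) :=
  (WithLp.equiv 2 _).symm fun s => (F s.1.1 s.1.2).coeff s.2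

lemma norm2_eq_norm_vec (F : MatPoly d k) (W : Finset (Word d))
    (h : ∀ i j, (F i j).coeff.support ⊆ W) : F.norm2 = ‖vec F W‖ := by
  rw [MatPoly.norm2, EuclideanSpace.norm_eq, matPoly_normSq_eq_sum F W h]
  congr 1
  rw [Fintype.sum_prod_type]
  rw [Fintype.sum_prod_type]
  refine Finset.sum_congr rfl fun i _ => Finset.sum_congr rfl fun j _ => ?_
  rw [← Finset.sum_coe_sort W]
  exact Finset.sum_congr rfl fun w _ => by simp [vec, WithLp.equiv_symm_apply]


lemma normSq_nonneg (F : MatPoly d k) : 0 ≤ F.normSq :=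
  Finset.sum_nonneg fun _ _ => Finset.sum_nonneg fun _ _ =>
    Finset.sum_nonneg fun _ _ => sq_nonneg _

lemma norm2_nonneg (F : MatPoly d k) : 0 ≤ F.norm2 := Real.sqrt_nonneg _

lemma norm2_zero : (0 : MatPoly d k).norm2 = 0 := by
  have : (0 : MatPoly d k).normSq = 0 := by
    simp [MatPoly.normSq, FreePoly.normSq]
  rw [MatPoly.norm2, this, Real.sqrt_zero]

lemma norm2_add_le (F G : MatPoly d k) : (F + G).norm2 ≤ F.norm2 + G.norm2 := by
  set W := bigSupp F ∪ bigSupp G with hW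
  have hF : ∀ i j, (F i j).coeff.support ⊆ W := fun i j =>
    (supp_subset_bigSupp F i j).trans Finset.subset_union_left
  have hG : ∀ i j, (G i j).coeff.support ⊆ W := fun i j =>
    (supp_subset_bigSupp G i j).trans Finset.subset_union_right
  have hFG : ∀ i j, ((F + G) i j).coeff.support ⊆ W := by
    intro i j
    have : (F + G) i j = F i j + G i j := rfl
    rw [this, MonoidAlgebra.coeff_add]
    exact Finsupp.support_add.trans (Finset.union_subset (hF i j) (hG i j))
  rw [norm2_eq_norm_vec (F + G) W hFG, norm2_eq_norm_vec F W hF, norm2_eq_norm_vec G W hG]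
  have : vec (F + G) W = vec F W + vec G W := by
    ext s; rfl
  rw [this]
  exact norm_add_le _ _

lemma norm2_smul (c : ℂ) (F : MatPoly d k) : (c • F).norm2 = ‖c‖ * F.norm2 := by
  set W := bigSupp F with hW
  have hF : ∀ i j, (F i j).coeff.support ⊆ W := supp_subset_bigSupp F
  have hcF : ∀ i j, ((c • F) i j).coeff.support ⊆ W := by
    intro i j
    have : (c • F) i j = c • F i j := rfl
    rw [this, MonoidAlgebra.coeff_smul]
    exact (Finsupp.support_smul).trans (hF i j)
  rw [norm2_eq_norm_vec (c • F) W hcF, norm2_eq_norm_vec F W hF]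
  have : vec (c • F) W = c • vec F W := by ext s; rfl
  rw [this, norm_smul]

lemma norm2_sum_le {ι : Type*} (s : Finset ι) (G : ι → MatPoly d k) :
    (∑ i ∈ s, G i).norm2 ≤ ∑ i ∈ s, (G i).norm2 := by
  classical
  induction s using Finset.induction_on with
  | empty => simp [norm2_zero]
  | insert _ _ h ih =>
    rw [Finset.sum_insert h, Finset.sum_insert h]
    exact (norm2_add_le _ _).trans (by linarith)

/-- Key spectral inequality. -/
lemma col_contraction_ineq (M : Fin d → Matrix (Fin m) (Fin m) ℂ)
    (hM : opNorm (∑ j, (M j)ᴴ * M j) ≤ 1) (v : Fin m → ℂ) :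
    ∑ a, ∑ i, ‖(M a).mulVec v i‖ ^ 2 ≤ ∑ l, ‖v l‖ ^ 2 := by
  set x : EuclideanSpace ℂ (Fin m) := (WithLp.equiv 2 _).symm v with hx
  set T : Fin d → EuclideanSpace ℂ (Fin m) →L[ℂ] EuclideanSpace ℂ (Fin m) :=
    fun a => Matrix.toEuclideanCLM (𝕜 := ℂ) (M a) with hT
  have hTx : ∀ a, T a x = (WithLp.equiv 2 _).symm ((M a).mulVec v) := fun a =>
    Matrix.toEuclideanCLM_toLp (M a) v
  have hxn : ‖x‖ ^ 2 = ∑ l, ‖v l‖ ^ 2 := by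
    rw [EuclideanSpace.norm_eq, Real.sq_sqrt (Finset.sum_nonneg fun _ _ => sq_nonneg _)]
    simp [hx, WithLp.equiv_symm_apply]
  have h1 : ∀ a, ∑ i, ‖(M a).mulVec v i‖ ^ 2 = ‖T a x‖ ^ 2 := by
    intro a
    rw [hTx a, EuclideanSpace.norm_eq, Real.sq_sqrt (Finset.sum_nonneg fun _ _ => sq_nonneg _)]
    simp [WithLp.equiv_symm_apply]
  set S : Matrix (Fin m) (Fin m) ℂ := ∑ j, (M j)ᴴ * M j with hS
  set SC : EuclideanSpace ℂ (Fin m) →L[ℂ] EuclideanSpace ℂ (Fin m) :=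
    Matrix.toEuclideanCLM (𝕜 := ℂ) S with hSC
  have h2 : (inner ℂ x (SC x) : ℂ) = ∑ a, inner ℂ (T a x) (T a x) := by
    have hSC2 : SC = ∑ a, star (T a) * T a := by
      rw [hSC, hS, map_sum]
      refine Finset.sum_congr rfl fun a _ => ?_
      rw [_root_.map_mul, ← Matrix.star_eq_conjTranspose, map_star]
    rw [hSC2]
    rw [ContinuousLinearMap.sum_apply, inner_sum]
    refine Finset.sum_congr rfl fun a _ => ?_
    rw [ContinuousLinearMap.mul_apply, ContinuousLinearMap.star_eq_adjoint,
      ContinuousLinearMap.adjoint_inner_right]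
  have h3 : (inner ℂ x (SC x) : ℂ) = ((∑ a, ‖T a x‖ ^ 2 : ℝ) : ℂ) := by
    rw [h2]
    push_cast
    exact Finset.sum_congr rfl fun a _ => inner_self_eq_norm_sq_to_K _
  have h4 : (∑ a, ‖T a x‖ ^ 2 : ℝ) ≤ ‖x‖ ^ 2 := by
    have := norm_inner_le_norm (𝕜 := ℂ) x (SC x)
    have hb : ‖(inner ℂ x (SC x) : ℂ)‖ ≤ ‖x‖ ^ 2 := by
      refine this.trans ?_
      have := (SC.le_opNorm x)
      have hSCnorm : ‖SC‖ ≤ 1 := hM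
      nlinarith [norm_nonneg x, norm_nonneg (SC x)]
    have : (∑ a, ‖T a x‖ ^ 2 : ℝ) ≤ ‖(inner ℂ x (SC x) : ℂ)‖ := by
      rw [h3, Complex.norm_real]
      exact le_abs_self _
    linarith
  calc ∑ a, ∑ i, ‖(M a).mulVec v i‖ ^ 2 = ∑ a, ‖T a x‖ ^ 2 :=
        Finset.sum_congr rfl fun a _ => h1 a
    _ ≤ ‖x‖ ^ 2 := h4
    _ = ∑ l, ‖v l‖ ^ 2 := hxn

lemma sum4_reorder {α β γ δ : Type*} (s : Finset α) (t : Finset β) (u : Finset γ)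
    (v : Finset δ) (f : α → β → γ → δ → ℝ) :
    ∑ i ∈ s, ∑ j ∈ t, ∑ a ∈ u, ∑ w ∈ v, f i j a w
      = ∑ j ∈ t, ∑ w ∈ v, ∑ a ∈ u, ∑ i ∈ s, f i j a w := by
  calc ∑ i ∈ s, ∑ j ∈ t, ∑ a ∈ u, ∑ w ∈ v, f i j a w
      = ∑ j ∈ t, ∑ i ∈ s, ∑ a ∈ u, ∑ w ∈ v, f i j a w := Finset.sum_comm
    _ = ∑ j ∈ t, ∑ a ∈ u, ∑ i ∈ s, ∑ w ∈ v, f i j a w :=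
        Finset.sum_congr rfl fun _ _ => Finset.sum_comm
    _ = ∑ j ∈ t, ∑ a ∈ u, ∑ w ∈ v, ∑ i ∈ s, f i j a w :=
        Finset.sum_congr rfl fun _ _ => Finset.sum_congr rfl fun _ _ => Finset.sum_comm
    _ = ∑ j ∈ t, ∑ w ∈ v, ∑ a ∈ u, ∑ i ∈ s, f i j a w :=
        Finset.sum_congr rfl fun _ _ => Finset.sum_comm

lemma sum3_reorder {α β γ : Type*} (s : Finset α) (t : Finset β) (u : Finset γ)
    (f : β → γ → α → ℝ) :
    ∑ j ∈ t, ∑ w ∈ u, ∑ l ∈ s, f j w l = ∑ l ∈ s, ∑ j ∈ t, ∑ w ∈ u, f j w l := by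
  calc ∑ j ∈ t, ∑ w ∈ u, ∑ l ∈ s, f j w l
      = ∑ j ∈ t, ∑ l ∈ s, ∑ w ∈ u, f j w l :=
        Finset.sum_congr rfl fun _ _ => Finset.sum_comm
    _ = ∑ l ∈ s, ∑ j ∈ t, ∑ w ∈ u, f j w l := Finset.sum_comm

lemma pencil_mul_entry (M : Fin d → Matrix (Fin m) (Fin m) ℂ) (F : MatPoly d m) (i j : Fin m) :
    (pencil M * F) i j =
      ∑ l, ∑ a, MonoidAlgebra.single (FreeMonoid.of a) (M a i l) * F l j := by
  rw [Matrix.mul_apply]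
  refine Finset.sum_congr rfl fun l _ => ?_
  rw [pencil, Matrix.of_apply, Finset.sum_mul]

lemma single_of_mul_apply (a : Fin d) (c : ℂ) (f : FreePoly d) (w : Word d) :
    (MonoidAlgebra.single (FreeMonoid.of a) c * f).coeff (FreeMonoid.of a * w) = c * f.coeff w :=
  MonoidAlgebra.coeff_single_mul_eq_mul_coeff (x := f) w fun _ _ => mul_left_cancel_iff

lemma single_of_mul_apply_ne {a b : Fin d} (hab : b ≠ a) (c : ℂ) (f : FreePoly d)
    (w : Word d) :
    (MonoidAlgebra.single (FreeMonoid.of b) c * f).coeff (FreeMonoid.of a * w) = 0 := by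
  by_contra h
  have hmem := Finsupp.mem_support_iff.mpr h
  have h2 := MonoidAlgebra.support_coeff_single_mul_subset f c (FreeMonoid.of b) hmem
  obtain ⟨u, -, he⟩ := Finset.mem_image.mp h2
  have := congrArg FreeMonoid.toList he
  simp only [FreeMonoid.toList_mul, FreeMonoid.toList_of, List.cons_append,
    List.nil_append] at this
  exact hab (List.head_eq_of_cons_eq this)

lemma pencil_coef (M : Fin d → Matrix (Fin m) (Fin m) ℂ) (F : MatPoly d m) (i j : Fin m)
    (a : Fin d) (w : Word d) :
    ((pencil M * F) i j).coeff (FreeMonoid.of a * w) = ∑ l, M a i l * (F l j).coeff w := by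
  rw [pencil_mul_entry, MonoidAlgebra.coeff_sum, Finsupp.finset_sum_apply]
  refine Finset.sum_congr rfl fun l _ => ?_
  rw [MonoidAlgebra.coeff_sum, Finsupp.finset_sum_apply, Finset.sum_eq_single a
    (fun b _ hba => single_of_mul_apply_ne hba _ _ _) (by simp)]
  exact single_of_mul_apply a _ (F l j) w

lemma pencil_supp (M : Fin d → Matrix (Fin m) (Fin m) ℂ) (F : MatPoly d m) (i j : Fin m) :
    ((pencil M * F) i j).coeff.support ⊆
      (Finset.univ ×ˢ bigSupp F).image (fun q : Fin d × Word d => FreeMonoid.of q.1 * q.2) := by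
  simp only [pencil_mul_entry, MonoidAlgebra.coeff_sum]
  intro u hu
  obtain ⟨l, -, hl⟩ := Finset.mem_biUnion.mp (Finsupp.support_finset_sum hu)
  obtain ⟨a, -, ha⟩ := Finset.mem_biUnion.mp (Finsupp.support_finset_sum hl)
  obtain ⟨w, hw, rfl⟩ :=
    Finset.mem_image.mp (MonoidAlgebra.support_coeff_single_mul_subset _ _ _ ha)
  exact Finset.mem_image.mpr ⟨(a, w),
    Finset.mem_product.mpr ⟨Finset.mem_univ _, supp_subset_bigSupp F l j hw⟩, rfl⟩

lemma pencil_mul_norm2_le (M : Fin d → Matrix (Fin m) (Fin m) ℂ)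
    (hM : opNorm (∑ j, (M j)ᴴ * M j) ≤ 1) (F : MatPoly d m) :
    MatPoly.norm2 (pencil M * F) ≤ F.norm2 := by
  have key : MatPoly.normSq (pencil M * F) ≤ F.normSq := by
    set T := bigSupp F with hT
    set S := (Finset.univ ×ˢ T).image (fun q : Fin d × Word d => FreeMonoid.of q.1 * q.2)
      with hSdef
    rw [matPoly_normSq_eq_sum (pencil M * F) S (pencil_supp M F),
        matPoly_normSq_eq_sum F T (supp_subset_bigSupp F)]
    have hinj : ∀ x ∈ Finset.univ ×ˢ T, ∀ y ∈ Finset.univ ×ˢ T,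
        (fun q : Fin d × Word d => FreeMonoid.of q.1 * q.2) x =
        (fun q : Fin d × Word d => FreeMonoid.of q.1 * q.2) y → x = y := by
      rintro ⟨a, w⟩ - ⟨b, u⟩ - h
      have := congrArg FreeMonoid.toList h
      simp only [FreeMonoid.toList_mul, FreeMonoid.toList_of, List.cons_append,
        List.nil_append, List.cons.injEq] at this
      exact Prod.ext this.1 (FreeMonoid.toList.injective this.2)
    have step1 : ∀ i j, ∑ u ∈ S, ‖((pencil M * F) i j).coeff u‖ ^ 2 =
        ∑ a, ∑ w ∈ T, ‖∑ l, M a i l * (F l j).coeff w‖ ^ 2 := by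
      intro i j
      rw [hSdef, Finset.sum_image hinj, Finset.sum_product]
      exact Finset.sum_congr rfl fun a _ => Finset.sum_congr rfl fun w _ => by
        rw [pencil_coef]
    calc ∑ i, ∑ j, ∑ u ∈ S, ‖((pencil M * F) i j).coeff u‖ ^ 2
        = ∑ i, ∑ j, ∑ a, ∑ w ∈ T, ‖∑ l, M a i l * (F l j).coeff w‖ ^ 2 :=
          Finset.sum_congr rfl fun i _ => Finset.sum_congr rfl fun j _ => step1 i j
      _ = ∑ j, ∑ w ∈ T, ∑ a, ∑ i, ‖∑ l, M a i l * (F l j).coeff w‖ ^ 2 :=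
          sum4_reorder _ _ _ _ _
      _ ≤ ∑ j, ∑ w ∈ T, ∑ l, ‖(F l j).coeff w‖ ^ 2 := by
          refine Finset.sum_le_sum fun j _ => Finset.sum_le_sum fun w _ => ?_
          have h := col_contraction_ineq M hM (fun l => (F l j).coeff w)
          simpa [Matrix.mulVec, dotProduct] using h
      _ = ∑ i, ∑ j, ∑ w ∈ T, ‖(F i j).coeff w‖ ^ 2 := sum3_reorder _ _ _ _
  exact Real.sqrt_le_sqrt key

lemma pow_pencil_mul_norm2_le (M : Fin d → Matrix (Fin m) (Fin m) ℂ)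
    (hM : opNorm (∑ j, (M j)ᴴ * M j) ≤ 1) :
    ∀ (k : ℕ) (F : MatPoly d m), MatPoly.norm2 (pencil M ^ k * F) ≤ F.norm2
  | 0, F => by rw [pow_zero, one_mul]
  | (k+1), F => by
    rw [pow_succ', mul_assoc]
    exact (pencil_mul_norm2_le M hM _).trans (pow_pencil_mul_norm2_le M hM k F)

lemma sum_succ_real (p : ℕ) : ∑ k ∈ Finset.range p, ((k : ℝ) + 1) = (p : ℝ) * ((p : ℝ) + 1) / 2 := by
  induction p with
  | zero => simp
  | succ q ih => rw [Finset.sum_range_succ, ih]; push_cast; ring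

lemma coef_norm (n k : ℕ) (hk : k ≤ n) :
    ‖(1 - ((k : ℂ) + 1) / ((n : ℂ) + 2))‖ = 1 - ((k : ℝ) + 1) / ((n : ℝ) + 2) := by
  have hcast : (1 - ((k : ℂ) + 1) / ((n : ℂ) + 2)) =
      (((1 - ((k : ℝ) + 1) / ((n : ℝ) + 2)) : ℝ) : ℂ) := by push_cast; ring
  rw [hcast, Complex.norm_real, Real.norm_eq_abs, abs_of_nonneg]
  have hn2 : (0 : ℝ) < (n : ℝ) + 2 := by positivity
  rw [sub_nonneg, div_le_one hn2]
  have : (k : ℝ) ≤ n := by exact_mod_cast hk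
  linarith

lemma coef_sum (n : ℕ) :
    ∑ k ∈ Finset.range (n + 1), (1 - ((k : ℝ) + 1) / ((n : ℝ) + 2)) = ((n : ℝ) + 1) / 2 := by
  have hn2 : ((n : ℝ) + 2) ≠ 0 := by positivity
  rw [Finset.sum_sub_distrib, Finset.sum_const, Finset.card_range, ← Finset.sum_div, sum_succ_real (n + 1)]
  push_cast
  field_simp
  ring

end Aux

/-- If `M` is a column contraction, the multiplier norm of `π_n(Mx)` is at most
`(n+1)/2`. -/
theorem piMx_mult_norm {d m : ℕ} (n : ℕ) (M : Fin d → Matrix (Fin m) (Fin m) ℂ)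
    (hM : opNorm (∑ j, (M j)ᴴ * M j) ≤ 1) :
    ∀ F : MatPoly d m,
      MatPoly.norm2 (piMx n M * F) ≤ (((n : ℝ) + 1) / 2) * MatPoly.norm2 F := by
  intro F
  have hexp : piMx n M * F = ∑ k ∈ Finset.range (n + 1),
      (1 - ((k : ℂ) + 1) / ((n : ℂ) + 2)) • (pencil M ^ k * F) := by
    rw [piMx, Finset.sum_mul]
    exact Finset.sum_congr rfl fun k _ => Matrix.smul_mul _ _ _
  rw [hexp]
  calc MatPoly.norm2 (∑ k ∈ Finset.range (n + 1),
        (1 - ((k : ℂ) + 1) / ((n : ℂ) + 2)) • (pencil M ^ k * F))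
      ≤ ∑ k ∈ Finset.range (n + 1),
          MatPoly.norm2 ((1 - ((k : ℂ) + 1) / ((n : ℂ) + 2)) • (pencil M ^ k * F)) :=
        Aux.norm2_sum_le _ _
    _ = ∑ k ∈ Finset.range (n + 1),
          ‖(1 - ((k : ℂ) + 1) / ((n : ℂ) + 2))‖ * MatPoly.norm2 (pencil M ^ k * F) :=
        Finset.sum_congr rfl fun k _ => Aux.norm2_smul _ _
    _ ≤ ∑ k ∈ Finset.range (n + 1),
          (1 - ((k : ℝ) + 1) / ((n : ℝ) + 2)) * MatPoly.norm2 F := by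
        refine Finset.sum_le_sum fun k hk => ?_
        have hkn : k ≤ n := Nat.lt_succ_iff.mp (Finset.mem_range.mp hk)
        have h0 : (0 : ℝ) ≤ 1 - ((k : ℝ) + 1) / ((n : ℝ) + 2) :=
          Aux.coef_norm n k hkn ▸ norm_nonneg _
        rw [Aux.coef_norm n k hkn]
        exact mul_le_mul_of_nonneg_left (Aux.pow_pencil_mul_norm2_le M hM k F) h0
    _ = (((n : ℝ) + 1) / 2) * MatPoly.norm2 F := by
        rw [← Finset.sum_mul, Aux.coef_sum]
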